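/- Positive eigenvalue bounds for the approximately preconditioned matrix: define u(λ) = λ³ + (β₁ − α₀)λ² − (α₀β₁ + α₁α₂/(1 + η_E) + β₀β₁)λ + α₀α₁α₂/(1 + η_E) and v(λ) = λ³ − (β₀ + β₂)λ² + (β₀β₂ − β₀β₁ − β₁β₂)λ + 2β₀β₁β₂. Let ρ_u > 0 satisfy u(ρ_u) = 0 with u(t) ≠ 0 for all 0 < t < ρ_u (the smallest positive root of u), and let ρ_v satisfy v(ρ_v) = 0 with every real root t of v satisfying t ≤ ρ_v (the largest real root of v). Then every positive eigenvalue λ of M̃⁻¹K satisfies ρ_u ≤ λ ≤ ρ_v. -/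

import Mathlib

open Matrix


lemma herm_transpose {k : ℕ} {P : Matrix (Fin k) (Fin k) ℝ} (h : P.IsHermitian) : Pᵀ = P := by
  ext i j
  have := congrFun (congrFun h i) j
  simpa [conjTranspose_apply] using this

lemma sym_dot {k : ℕ} {P : Matrix (Fin k) (Fin k) ℝ} (hP : Pᵀ = P) (a b : Fin k → ℝ) :
    a ⬝ᵥ P *ᵥ b = b ⬝ᵥ P *ᵥ a := by
  rw [dotProduct_mulVec, ← mulVec_transpose, hP, dotProduct_comm]

lemma dot_transpose {k l : ℕ} (B : Matrix (Fin k) (Fin l) ℝ) (u : Fin l → ℝ) (w : Fin k → ℝ) :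
    u ⬝ᵥ Bᵀ *ᵥ w = w ⬝ᵥ B *ᵥ u := by
  rw [mulVec_transpose, dotProduct_comm, ← dotProduct_mulVec]

lemma pd_pos {k : ℕ} {P : Matrix (Fin k) (Fin k) ℝ} (hP : P.PosDef) {u : Fin k → ℝ}
    (hu : u ≠ 0) : 0 < u ⬝ᵥ P *ᵥ u := by
  have := hP.dotProduct_mulVec_pos hu
  simpa using this

lemma psd_nonneg {k : ℕ} {P : Matrix (Fin k) (Fin k) ℝ} (hP : P.PosSemidef) (u : Fin k → ℝ) :
    0 ≤ u ⬝ᵥ P *ᵥ u := by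
  have := hP.dotProduct_mulVec_nonneg u
  simpa using this

lemma cs_gen {k : ℕ} (P : Matrix (Fin k) (Fin k) ℝ)
    (hsym : Pᵀ = P) (hnn : ∀ a, 0 ≤ a ⬝ᵥ P *ᵥ a) (x y : Fin k → ℝ) :
    (x ⬝ᵥ P *ᵥ y) ^ 2 ≤ (x ⬝ᵥ P *ᵥ x) * (y ⬝ᵥ P *ᵥ y) := by
  have key : ∀ t : ℝ, 0 ≤ (y ⬝ᵥ P *ᵥ y) * (t * t) + (2 * (x ⬝ᵥ P *ᵥ y)) * t + (x ⬝ᵥ P *ᵥ x) := by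
    intro t
    have h0 := hnn (x + t • y)
    have hyx := sym_dot hsym y x
    have h1 : x ⬝ᵥ P *ᵥ x + t * x ⬝ᵥ P *ᵥ y + t * (x ⬝ᵥ P *ᵥ y + t * y ⬝ᵥ P *ᵥ y)
        = (y ⬝ᵥ P *ᵥ y) * (t * t) + (2 * (x ⬝ᵥ P *ᵥ y)) * t + (x ⬝ᵥ P *ᵥ x) := by ring
    rw [← h1]
    simpa [mulVec_add, mulVec_smul, dotProduct_add, add_dotProduct, smul_dotProduct,
      dotProduct_smul, smul_eq_mul, hyx] using h0
  have hd := discrim_le_zero key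
  unfold discrim at hd
  nlinarith [hd]

lemma mulVec_inv_cancel {k : ℕ} {N : Matrix (Fin k) (Fin k) ℝ} (hN : N.PosDef)
    (v : Fin k → ℝ) : N *ᵥ (N⁻¹ *ᵥ v) = v := by
  rw [mulVec_mulVec, Matrix.mul_nonsing_inv _ (isUnit_iff_ne_zero.2 hN.det_pos.ne'), one_mulVec]

lemma inv_mulVec_cancel {k : ℕ} {N : Matrix (Fin k) (Fin k) ℝ} (hN : N.PosDef)
    (v : Fin k → ℝ) : N⁻¹ *ᵥ (N *ᵥ v) = v := by
  rw [mulVec_mulVec, Matrix.nonsing_inv_mul _ (isUnit_iff_ne_zero.2 hN.det_pos.ne'), one_mulVec]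

lemma inv_quad_le {k : ℕ} {N A : Matrix (Fin k) (Fin k) ℝ} (hN : N.PosDef) (hA : A.PosDef)
    {κ : ℝ} (hκ : 0 < κ) (h : ∀ u : Fin k → ℝ, u ⬝ᵥ A *ᵥ u ≤ κ * (u ⬝ᵥ N *ᵥ u))
    (v : Fin k → ℝ) : v ⬝ᵥ N⁻¹ *ᵥ v ≤ κ * (v ⬝ᵥ A⁻¹ *ᵥ v) := by
  set g : Fin k → ℝ := N⁻¹ *ᵥ v with hg
  have hNg : N *ᵥ g = v := mulVec_inv_cancel hN v
  have hs : v ⬝ᵥ N⁻¹ *ᵥ v = g ⬝ᵥ N *ᵥ g := by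
    rw [hNg, ← hg, dotProduct_comm]
  have hAg : A *ᵥ (A⁻¹ *ᵥ v) = v := mulVec_inv_cancel hA v
  have hcs := cs_gen A (herm_transpose hA.1) (fun a => psd_nonneg hA.posSemidef a) g (A⁻¹ *ᵥ v)
  rw [hAg] at hcs
  have h2 : (A⁻¹ *ᵥ v) ⬝ᵥ v = v ⬝ᵥ A⁻¹ *ᵥ v := dotProduct_comm _ _
  rw [h2] at hcs
  have h3 : g ⬝ᵥ v = v ⬝ᵥ N⁻¹ *ᵥ v := dotProduct_comm _ _
  rw [h3] at hcs
  have h4 : g ⬝ᵥ A *ᵥ g ≤ κ * (v ⬝ᵥ N⁻¹ *ᵥ v) := by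
    calc g ⬝ᵥ A *ᵥ g ≤ κ * (g ⬝ᵥ N *ᵥ g) := h g
    _ = κ * (v ⬝ᵥ N⁻¹ *ᵥ v) := by rw [hs]
  have hnn : 0 ≤ v ⬝ᵥ N⁻¹ *ᵥ v := psd_nonneg hN.inv.posSemidef v
  have hnn2 : 0 ≤ v ⬝ᵥ A⁻¹ *ᵥ v := psd_nonneg hA.inv.posSemidef v
  have hgoal : v ⬝ᵥ g = v ⬝ᵥ N⁻¹ *ᵥ v := by rw [hg]
  rcases eq_or_lt_of_le hnn with he | hlt
  · rw [hgoal, ← he]; positivity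
  · rw [hgoal]; nlinarith [hcs, h4, hlt, hnn2]

lemma cubic_root_ge (c₂ c₁ c₀ t₀ : ℝ) (h : t₀ ^ 3 + c₂ * t₀ ^ 2 + c₁ * t₀ + c₀ ≤ 0) :
    ∃ r, t₀ ≤ r ∧ r ^ 3 + c₂ * r ^ 2 + c₁ * r + c₀ = 0 := by
  set f : ℝ → ℝ := fun t => t ^ 3 + c₂ * t ^ 2 + c₁ * t + c₀ with hf
  have hcont : ContinuousOn f (Set.Icc t₀ (max t₀ (1 + |c₂| + |c₁| + |c₀|))) := by
    apply Continuous.continuousOn; fun_prop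
  set T := max t₀ (1 + |c₂| + |c₁| + |c₀|) with hT
  have hT1 : 1 + |c₂| + |c₁| + |c₀| ≤ T := le_max_right _ _
  have hT0 : (1:ℝ) ≤ T := by
    have := abs_nonneg c₂; have := abs_nonneg c₁; have := abs_nonneg c₀; linarith
  have hfT : 0 < f T := by
    have h2 : -|c₂| ≤ c₂ := neg_abs_le c₂
    have h1 : -|c₁| ≤ c₁ := neg_abs_le c₁
    have h0 : -|c₀| ≤ c₀ := neg_abs_le c₀
    have e2 : |c₂| * T ^ 2 ≤ |c₂| * T ^ 2 := le_refl _
    have hTsq : T ≤ T ^ 2 := by nlinarith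
    have hTsq1 : (1:ℝ) ≤ T ^ 2 := by nlinarith
    have e1 : |c₁| * T ≤ |c₁| * T ^ 2 := mul_le_mul_of_nonneg_left hTsq (abs_nonneg c₁)
    have e0 : |c₀| ≤ |c₀| * T ^ 2 := by
      calc |c₀| = |c₀| * 1 := by ring
      _ ≤ |c₀| * T ^ 2 := mul_le_mul_of_nonneg_left hTsq1 (abs_nonneg c₀)
    have : T ^ 3 ≥ (1 + |c₂| + |c₁| + |c₀|) * T ^ 2 := by nlinarith
    simp only [hf]
    nlinarith
  have hmem : (0:ℝ) ∈ Set.Icc (f t₀) (f T) := ⟨h, le_of_lt hfT⟩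
  have := intermediate_value_Icc (le_max_left t₀ _) hcont hmem
  obtain ⟨r, hr, hfr⟩ := this
  exact ⟨r, hr.1, hfr⟩

lemma shift_transpose {k l : ℕ} (B : Matrix (Fin k) (Fin l) ℝ) (w : Fin k → ℝ) (u : Fin l → ℝ) :
    w ⬝ᵥ B *ᵥ u = (Bᵀ *ᵥ w) ⬝ᵥ u := by
  rw [← dot_transpose B u w, dotProduct_comm]

lemma transpose_herm {k : ℕ} {P : Matrix (Fin k) (Fin k) ℝ} (h : Pᵀ = P) : P.IsHermitian := by
  ext i j
  rw [conjTranspose_apply]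
  have := congrFun (congrFun h j) i
  simpa using this.symm

set_option maxHeartbeats 1000000 in
/-- Positive eigenvalue bounds for the approximately preconditioned matrix `M̃⁻¹K`:
every positive eigenvalue lies in `[ρ_u, ρ_v]`. -/
theorem stmt_19 (n m p : ℕ) (hp : 0 < p) (hmp : p ≤ m) (hnm : m ≤ n)
    (A : Matrix (Fin n) (Fin n) ℝ) (B : Matrix (Fin m) (Fin n) ℝ)
    (C : Matrix (Fin p) (Fin m) ℝ) (D : Matrix (Fin m) (Fin m) ℝ)
    (E : Matrix (Fin p) (Fin p) ℝ)
    (hA : A.PosDef) (hD : D.PosSemidef) (hE : E.PosSemidef)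
    (hB : B.rank = m) (hC : C.rank = p)
    (S₁ : Matrix (Fin m) (Fin m) ℝ) (hS₁ : S₁ = D + B * A⁻¹ * Bᵀ)
    (S₂ : Matrix (Fin p) (Fin p) ℝ) (hS₂ : S₂ = E + C * S₁⁻¹ * Cᵀ)
    (hS₁pd : S₁.PosDef) (hS₂pd : S₂.PosDef)
    (Atil : Matrix (Fin n) (Fin n) ℝ) (S₁til : Matrix (Fin m) (Fin m) ℝ)
    (S₂til : Matrix (Fin p) (Fin p) ℝ)
    (hAtil : Atil.PosDef) (hS₁til : S₁til.PosDef) (hS₂til : S₂til.PosDef)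
    (α₀ β₀ α₁ β₁ α₂ β₂ : ℝ)
    (hα₀ : 0 < α₀) (hα₀1 : α₀ ≤ 1) (hβ₀ : 1 ≤ β₀)
    (hα₁ : 0 < α₁) (hα₁1 : α₁ ≤ 1) (hβ₁ : 1 ≤ β₁)
    (hα₂ : 0 < α₂) (hα₂1 : α₂ ≤ 1) (hβ₂ : 1 ≤ β₂)
    (hAequiv : ∀ x : Fin n → ℝ,
      α₀ * (x ⬝ᵥ Atil.mulVec x) ≤ x ⬝ᵥ A.mulVec x ∧
      x ⬝ᵥ A.mulVec x ≤ β₀ * (x ⬝ᵥ Atil.mulVec x))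
    (hS₁equiv : ∀ y : Fin m → ℝ,
      α₁ * (y ⬝ᵥ S₁til.mulVec y) ≤ y ⬝ᵥ S₁.mulVec y ∧
      y ⬝ᵥ S₁.mulVec y ≤ β₁ * (y ⬝ᵥ S₁til.mulVec y))
    (hS₂equiv : ∀ z : Fin p → ℝ,
      α₂ * (z ⬝ᵥ S₂til.mulVec z) ≤ z ⬝ᵥ S₂.mulVec z ∧
      z ⬝ᵥ S₂.mulVec z ≤ β₂ * (z ⬝ᵥ S₂til.mulVec z))
    (ηD : ℝ) (hηD0 : 0 ≤ ηD)
    (hηD : ∀ y : Fin m → ℝ, y ⬝ᵥ D.mulVec y ≤ ηD * (y ⬝ᵥ (B * A⁻¹ * Bᵀ).mulVec y))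
    (ηE : ℝ) (hηE0 : 0 ≤ ηE)
    (hηE : ∀ z : Fin p → ℝ, z ⬝ᵥ E.mulVec z ≤ ηE * (z ⬝ᵥ (C * S₁⁻¹ * Cᵀ).mulVec z))
    (K : Matrix ((Fin n ⊕ Fin m) ⊕ Fin p) ((Fin n ⊕ Fin m) ⊕ Fin p) ℝ)
    (hK : K = fromBlocks (fromBlocks A Bᵀ B (-D)) (fromRows 0 Cᵀ) (fromCols 0 C) E)
    (Mtil : Matrix ((Fin n ⊕ Fin m) ⊕ Fin p) ((Fin n ⊕ Fin m) ⊕ Fin p) ℝ)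
    (hMtil : Mtil = fromBlocks (fromBlocks Atil 0 0 S₁til) 0 0 S₂til)
    -- ρu is the smallest positive root of u
    (ρu : ℝ) (hρupos : 0 < ρu)
    (hρu : ρu ^ 3 + (β₁ - α₀) * ρu ^ 2
        - (α₀ * β₁ + α₁ * α₂ / (1 + ηE) + β₀ * β₁) * ρu
        + α₀ * α₁ * α₂ / (1 + ηE) = 0)
    (hρumin : ∀ t : ℝ, 0 < t → t < ρu →
      t ^ 3 + (β₁ - α₀) * t ^ 2 - (α₀ * β₁ + α₁ * α₂ / (1 + ηE) + β₀ * β₁) * t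
        + α₀ * α₁ * α₂ / (1 + ηE) ≠ 0)
    -- ρv is the largest real root of v
    (ρv : ℝ)
    (hρv : ρv ^ 3 - (β₀ + β₂) * ρv ^ 2 + (β₀ * β₂ - β₀ * β₁ - β₁ * β₂) * ρv
        + 2 * β₀ * β₁ * β₂ = 0)
    (hρvmax : ∀ t : ℝ, t ^ 3 - (β₀ + β₂) * t ^ 2
        + (β₀ * β₂ - β₀ * β₁ - β₁ * β₂) * t + 2 * β₀ * β₁ * β₂ = 0 → t ≤ ρv) :
    ∀ (lam : ℝ) (v : (Fin n ⊕ Fin m) ⊕ Fin p → ℝ), v ≠ 0 →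
      K.mulVec v = lam • Mtil.mulVec v → 0 < lam →
      ρu ≤ lam ∧ lam ≤ ρv := by
  intro lam v hv0 hKM hlam
  set x : Fin n → ℝ := fun i => v (Sum.inl (Sum.inl i)) with hxdef
  set y : Fin m → ℝ := fun i => v (Sum.inl (Sum.inr i)) with hydef
  set z : Fin p → ℝ := fun i => v (Sum.inr i) with hzdef
  have hvelim : v = Sum.elim (Sum.elim x y) z := by
    funext i; rcases i with (i | i) | i <;> rfl
  rw [hK, hMtil, hvelim] at hKM
  have eq1 : A *ᵥ x + Bᵀ *ᵥ y = lam • (Atil *ᵥ x) := by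
    funext i
    have h := congrFun hKM (Sum.inl (Sum.inl i))
    simpa [fromBlocks_mulVec, fromRows_mulVec, fromCols_mulVec_sumElim,
      Sum.elim_comp_inl, Sum.elim_comp_inr] using h
  have eq2 : B *ᵥ x - D *ᵥ y + Cᵀ *ᵥ z = lam • (S₁til *ᵥ y) := by
    funext i
    have h := congrFun hKM (Sum.inl (Sum.inr i))
    simpa [fromBlocks_mulVec, fromRows_mulVec, fromCols_mulVec_sumElim,
      Sum.elim_comp_inl, Sum.elim_comp_inr, neg_mulVec, sub_eq_add_neg] using h
  have eq3 : C *ᵥ y + E *ᵥ z = lam • (S₂til *ᵥ z) := by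
    funext i
    have h := congrFun hKM (Sum.inr i)
    simpa [fromBlocks_mulVec, fromRows_mulVec, fromCols_mulVec_sumElim,
      Sum.elim_comp_inl, Sum.elim_comp_inr] using h
  -- scalar quantities
  set a := x ⬝ᵥ A *ᵥ x with ha
  set ta := x ⬝ᵥ Atil *ᵥ x with hta
  set b := y ⬝ᵥ B *ᵥ x with hb
  set c := z ⬝ᵥ C *ᵥ y with hc
  set d := y ⬝ᵥ D *ᵥ y with hd
  set ee := z ⬝ᵥ E *ᵥ z with hee
  set s1 := y ⬝ᵥ S₁ *ᵥ y with hs1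
  set t1 := y ⬝ᵥ S₁til *ᵥ y with ht1
  set s2 := z ⬝ᵥ S₂ *ᵥ z with hs2
  set t2 := z ⬝ᵥ S₂til *ᵥ z with ht2
  set q := y ⬝ᵥ (B * A⁻¹ * Bᵀ) *ᵥ y with hq
  set w := z ⬝ᵥ (C * S₁⁻¹ * Cᵀ) *ᵥ z with hw
  -- scalar equations
  have se1 : a + b = lam * ta := by
    rw [ha, hb, hta]
    have h := congrArg (fun u => x ⬝ᵥ u) eq1
    simpa [dotProduct_add, dotProduct_smul, smul_eq_mul, dot_transpose] using h
  have se2 : b - d + c = lam * t1 := by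
    rw [hb, hd, hc, ht1]
    have h := congrArg (fun u => y ⬝ᵥ u) eq2
    simpa [dotProduct_add, dotProduct_sub, dotProduct_smul, smul_eq_mul, dot_transpose] using h
  have se3 : c + ee = lam * t2 := by
    rw [hc, hee, ht2]
    have h := congrArg (fun u => z ⬝ᵥ u) eq3
    simpa [dotProduct_add, dotProduct_smul, smul_eq_mul] using h
  -- basic positivity and equivalence facts
  have hta0 : 0 ≤ ta := by rw [hta]; exact psd_nonneg hAtil.posSemidef x
  have ht10 : 0 ≤ t1 := by rw [ht1]; exact psd_nonneg hS₁til.posSemidef y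
  have ht20 : 0 ≤ t2 := by rw [ht2]; exact psd_nonneg hS₂til.posSemidef z
  have hd0 : 0 ≤ d := by rw [hd]; exact psd_nonneg hD y
  have hee0 : 0 ≤ ee := by rw [hee]; exact psd_nonneg hE z
  have ha_lo : α₀ * ta ≤ a := by rw [hta, ha]; exact (hAequiv x).1
  have ha_hi : a ≤ β₀ * ta := by rw [hta, ha]; exact (hAequiv x).2
  have hs1_lo : α₁ * t1 ≤ s1 := by rw [ht1, hs1]; exact (hS₁equiv y).1
  have hs1_hi : s1 ≤ β₁ * t1 := by rw [ht1, hs1]; exact (hS₁equiv y).2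
  have hs2_lo : α₂ * t2 ≤ s2 := by rw [ht2, hs2]; exact (hS₂equiv z).1
  have hs2_hi : s2 ≤ β₂ * t2 := by rw [ht2, hs2]; exact (hS₂equiv z).2
  have he_w : ee ≤ ηE * w := by rw [hee, hw]; exact hηE z
  have hqrw : y ⬝ᵥ (B * A⁻¹ * Bᵀ) *ᵥ y = (Bᵀ *ᵥ y) ⬝ᵥ A⁻¹ *ᵥ (Bᵀ *ᵥ y) := by
    rw [show (B * A⁻¹ * Bᵀ) *ᵥ y = B *ᵥ (A⁻¹ *ᵥ (Bᵀ *ᵥ y)) by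
      rw [mulVec_mulVec, mulVec_mulVec], shift_transpose]
  have hwrw : z ⬝ᵥ (C * S₁⁻¹ * Cᵀ) *ᵥ z = (Cᵀ *ᵥ z) ⬝ᵥ S₁⁻¹ *ᵥ (Cᵀ *ᵥ z) := by
    rw [show (C * S₁⁻¹ * Cᵀ) *ᵥ z = C *ᵥ (S₁⁻¹ *ᵥ (Cᵀ *ᵥ z)) by
      rw [mulVec_mulVec, mulVec_mulVec], shift_transpose]
  have hq0 : 0 ≤ q := by rw [hq, hqrw]; exact psd_nonneg hA.inv.posSemidef _
  have hw0 : 0 ≤ w := by rw [hw, hwrw]; exact psd_nonneg hS₁pd.inv.posSemidef _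
  have hs1dq : s1 = d + q := by
    rw [hs1, hd, hq, hS₁, add_mulVec, dotProduct_add]
  have hs2ew : s2 = ee + w := by
    rw [hs2, hee, hw, hS₂, add_mulVec, dotProduct_add]
  -- Cauchy-Schwarz facts
  have hb2 : b ^ 2 ≤ a * q := by
    rw [hb, ha, hq]
    have hcs := cs_gen A (herm_transpose hA.1) (fun u => psd_nonneg hA.posSemidef u)
      x (A⁻¹ *ᵥ (Bᵀ *ᵥ y))
    rw [mulVec_inv_cancel hA] at hcs
    have h1 : x ⬝ᵥ Bᵀ *ᵥ y = y ⬝ᵥ B *ᵥ x := dot_transpose B x y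
    have h2 : (A⁻¹ *ᵥ (Bᵀ *ᵥ y)) ⬝ᵥ Bᵀ *ᵥ y = y ⬝ᵥ (B * A⁻¹ * Bᵀ) *ᵥ y := by
      rw [dotProduct_comm, hqrw]
    rw [h1, h2] at hcs
    exact hcs
  have hc2 : c ^ 2 ≤ s1 * w := by
    rw [hc, hs1, hw]
    have hcs := cs_gen S₁ (herm_transpose hS₁pd.1) (fun u => psd_nonneg hS₁pd.posSemidef u)
      y (S₁⁻¹ *ᵥ (Cᵀ *ᵥ z))
    rw [mulVec_inv_cancel hS₁pd] at hcs
    have h1 : y ⬝ᵥ Cᵀ *ᵥ z = z ⬝ᵥ C *ᵥ y := dot_transpose C y z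
    have h2 : (S₁⁻¹ *ᵥ (Cᵀ *ᵥ z)) ⬝ᵥ Cᵀ *ᵥ z = z ⬝ᵥ (C * S₁⁻¹ * Cᵀ) *ᵥ z := by
      rw [dotProduct_comm, hwrw]
    rw [h1, h2] at hcs
    exact hcs
  have hηE1 : (0:ℝ) < 1 + ηE := by linarith only [hηE0]
  constructor
  · -- lower bound : ρu ≤ lam
    have uroot_le : ∀ t : ℝ, 0 < t →
        t ^ 3 + (β₁ - α₀) * t ^ 2 - (α₀ * β₁ + α₁ * α₂ / (1 + ηE) + β₀ * β₁) * t
          + α₀ * α₁ * α₂ / (1 + ηE) ≤ 0 → ρu ≤ t := by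
      intro t ht hu
      by_contra hcon
      push_neg at hcon
      set f : ℝ → ℝ := fun s => s ^ 3 + (β₁ - α₀) * s ^ 2
        - (α₀ * β₁ + α₁ * α₂ / (1 + ηE) + β₀ * β₁) * s + α₀ * α₁ * α₂ / (1 + ηE) with hf
      have hf0 : 0 < f 0 := by
        simp only [hf]
        have : (0:ℝ) < α₀ * α₁ * α₂ / (1 + ηE) := by positivity
        simpa using this
      have hcont : ContinuousOn f (Set.Icc 0 t) := by
        apply Continuous.continuousOn; fun_prop
      have hmem : (0:ℝ) ∈ Set.Icc (f t) (f 0) := ⟨hu, le_of_lt hf0⟩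
      obtain ⟨r, hr, hfr⟩ := intermediate_value_Icc' (le_of_lt ht) hcont hmem
      have hrpos : 0 < r := by
        rcases eq_or_lt_of_le hr.1 with h0 | h0
        · exfalso; rw [← h0] at hfr; exact absurd hfr (ne_of_gt hf0)
        · exact h0
      exact hρumin r hrpos (lt_of_le_of_lt hr.2 hcon) hfr
    have hρuα₀ : ρu ≤ α₀ := by
      apply uroot_le α₀ hα₀
      have hval : α₀ ^ 3 + (β₁ - α₀) * α₀ ^ 2
          - (α₀ * β₁ + α₁ * α₂ / (1 + ηE) + β₀ * β₁) * α₀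
          + α₀ * α₁ * α₂ / (1 + ηE) = -(β₀ * β₁ * α₀) := by ring
      rw [hval]
      have h1 : (0:ℝ) < β₀ * β₁ * α₀ := by positivity
      linarith only [h1]
    rcases le_or_gt α₀ lam with hcase | hcase
    · exact le_trans hρuα₀ hcase
    -- hard case : 0 < lam < α₀
    set N := A - lam • Atil with hNdef
    have hNform : ∀ u : Fin n → ℝ, u ⬝ᵥ N *ᵥ u = u ⬝ᵥ A *ᵥ u - lam * (u ⬝ᵥ Atil *ᵥ u) := by
      intro u
      rw [hNdef, sub_mulVec, dotProduct_sub, smul_mulVec, dotProduct_smul, smul_eq_mul]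
    have hAsymT := herm_transpose hA.1
    have hAtilsymT := herm_transpose hAtil.1
    have hDsymT := herm_transpose hD.1
    have hS₁tilsymT := herm_transpose hS₁til.1
    have hN : N.PosDef := by
      refine Matrix.PosDef.of_dotProduct_mulVec_pos ?_ ?_
      · apply transpose_herm
        rw [hNdef, transpose_sub, transpose_smul, hAsymT, hAtilsymT]
      · intro u hu
        have h1 := (hAequiv u).1
        have h2 : 0 < u ⬝ᵥ Atil *ᵥ u := pd_pos hAtil hu
        have h4 : 0 < u ⬝ᵥ N *ᵥ u := by
          rw [hNform u]
          linarith only [h1, mul_pos (sub_pos.mpr hcase) h2]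
        simpa using h4
    have hNx : N *ᵥ x = -(Bᵀ *ᵥ y) := by
      have h1 : N *ᵥ x = A *ᵥ x - lam • (Atil *ᵥ x) := by
        rw [hNdef, sub_mulVec, smul_mulVec]
      rw [h1, ← eq1]
      abel
    have hNinvBy : N⁻¹ *ᵥ (Bᵀ *ᵥ y) = -x := by
      rw [show Bᵀ *ᵥ y = -(N *ᵥ x) by rw [hNx, neg_neg], mulVec_neg, inv_mulVec_cancel hN]
    set M := lam • S₁til + D + B * N⁻¹ * Bᵀ with hMdef
    have hMform : ∀ u u' : Fin m → ℝ, u ⬝ᵥ M *ᵥ u'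
        = lam * (u ⬝ᵥ S₁til *ᵥ u') + u ⬝ᵥ D *ᵥ u' + (Bᵀ *ᵥ u) ⬝ᵥ N⁻¹ *ᵥ (Bᵀ *ᵥ u') := by
      intro u u'
      have h1 : (B * N⁻¹ * Bᵀ) *ᵥ u' = B *ᵥ (N⁻¹ *ᵥ (Bᵀ *ᵥ u')) := by
        rw [mulVec_mulVec, mulVec_mulVec]
      rw [hMdef, add_mulVec, add_mulVec, dotProduct_add, dotProduct_add, smul_mulVec,
        dotProduct_smul, smul_eq_mul, h1, shift_transpose B u (N⁻¹ *ᵥ (Bᵀ *ᵥ u'))]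
    have hNinvsymT : (N⁻¹)ᵀ = N⁻¹ := herm_transpose hN.inv.1
    have hMsymT : Mᵀ = M := by
      rw [hMdef, transpose_add, transpose_add, transpose_smul, hS₁tilsymT, hDsymT,
        transpose_mul, transpose_mul, transpose_transpose, hNinvsymT, Matrix.mul_assoc]
    have hMnn : ∀ u, 0 ≤ u ⬝ᵥ M *ᵥ u := by
      intro u
      rw [hMform]
      have h1 : 0 ≤ u ⬝ᵥ S₁til *ᵥ u := psd_nonneg hS₁til.posSemidef u
      have h2 : 0 ≤ u ⬝ᵥ D *ᵥ u := psd_nonneg hD u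
      have h3 : 0 ≤ (Bᵀ *ᵥ u) ⬝ᵥ N⁻¹ *ᵥ (Bᵀ *ᵥ u) := psd_nonneg hN.inv.posSemidef _
      have h4 : 0 ≤ lam * (u ⬝ᵥ S₁til *ᵥ u) := mul_nonneg hlam.le h1
      linarith only [h2, h3, h4]
    have hMy : M *ᵥ y = Cᵀ *ᵥ z := by
      have h1 : M *ᵥ y = lam • (S₁til *ᵥ y) + D *ᵥ y + B *ᵥ (N⁻¹ *ᵥ (Bᵀ *ᵥ y)) := by
        rw [hMdef, add_mulVec, add_mulVec, smul_mulVec,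
          show (B * N⁻¹ * Bᵀ) *ᵥ y = B *ᵥ (N⁻¹ *ᵥ (Bᵀ *ᵥ y)) by rw [mulVec_mulVec, mulVec_mulVec]]
      rw [h1, hNinvBy, mulVec_neg, ← eq2]
      abel
    have hcMy : c = y ⬝ᵥ M *ᵥ y := by
      rw [hc, ← dot_transpose C y z, hMy]
    have hcform : c = lam * t1 + d + (Bᵀ *ᵥ y) ⬝ᵥ N⁻¹ *ᵥ (Bᵀ *ᵥ y) := by
      rw [hcMy, hMform, ht1, hd]
    have hclam : lam * t1 + d ≤ c := by
      have h1 := psd_nonneg hN.inv.posSemidef (Bᵀ *ᵥ y)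
      linarith only [h1, hcform.le, hcform.ge]
    -- y ≠ 0
    have hyne : y ≠ 0 := by
      intro hy0
      have hby : Bᵀ *ᵥ y = 0 := by rw [hy0, mulVec_zero]
      have hNx0 : N *ᵥ x = 0 := by rw [hNx, hby, neg_zero]
      have hx0 : x = 0 := by
        by_contra hxne
        have h1 := pd_pos hN hxne
        rw [hNx0, dotProduct_zero] at h1
        exact lt_irrefl 0 h1
      have hCz : Cᵀ *ᵥ z = 0 := by
        have h := eq2
        rw [hx0, hy0, mulVec_zero, mulVec_zero, mulVec_zero] at h
        simpa using h
      have hw00 : w = 0 := by rw [hw, hwrw, hCz]; simp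
      have hee00 : ee = 0 := by
        have h1 := he_w; rw [hw00] at h1
        have h2 : ee ≤ 0 := by simpa using h1
        linarith only [h2, hee0]
      have hs20 : s2 = 0 := by rw [hs2ew, hw00, hee00]; ring
      have ht2z : t2 ≤ 0 := by nlinarith only [hs2_lo, hs20, hα₂]
      have hz0 : z = 0 := by
        by_contra hzne
        have h1 : 0 < t2 := by rw [ht2]; exact pd_pos hS₂til hzne
        linarith only [h1, ht2z]
      apply hv0
      rw [hvelim, hx0, hy0, hz0]
      funext i; rcases i with (i | i) | i <;> rfl
    have ht1pos : 0 < t1 := by rw [ht1]; exact pd_pos hS₁til hyne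
    have hcpos : 0 < c := by
      linarith only [hclam, hd0, mul_pos hlam ht1pos]
    -- z ≠ 0
    have hzne : z ≠ 0 := by
      intro hz0
      rw [hc, hz0] at hcpos
      simp at hcpos
    have ht2pos : 0 < t2 := by rw [ht2]; exact pd_pos hS₂til hzne
    -- the g vector
    set g : Fin m → ℝ := S₁⁻¹ *ᵥ (Cᵀ *ᵥ z) with hgdef
    clear_value g
    have hgS1 : S₁ *ᵥ g = Cᵀ *ᵥ z := by rw [hgdef]; exact mulVec_inv_cancel hS₁pd _
    have hgS1g : g ⬝ᵥ S₁ *ᵥ g = w := by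
      rw [hgS1, dotProduct_comm, hw, hwrw, hgdef]
    have hgMy : g ⬝ᵥ M *ᵥ y = w := by
      rw [hMy, dotProduct_comm, hw, hwrw, hgdef]
    -- kappa
    set κ := α₀ / (α₀ - lam) with hκdef
    have hα₀lam : 0 < α₀ - lam := by linarith only [hcase]
    have hκpos : 0 < κ := by rw [hκdef]; positivity
    have hκ1 : 1 ≤ κ := by
      rw [hκdef, le_div_iff₀ hα₀lam]; linarith only [hlam]
    have hNA : ∀ u : Fin n → ℝ, u ⬝ᵥ A *ᵥ u ≤ κ * (u ⬝ᵥ N *ᵥ u) := by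
      intro u
      have h1 := (hAequiv u).1
      rw [hNform, hκdef, div_mul_eq_mul_div, le_div_iff₀ hα₀lam]
      nlinarith only [mul_le_mul_of_nonneg_left h1 hlam.le]
    have hNinvA := inv_quad_le hN hA hκpos hNA (Bᵀ *ᵥ g)
    have hgMg : g ⬝ᵥ M *ᵥ g ≤ (lam / α₁ + κ) * w := by
      rw [hMform]
      have hgs1til : 0 ≤ g ⬝ᵥ S₁til *ᵥ g := psd_nonneg hS₁til.posSemidef g
      have hgd : 0 ≤ g ⬝ᵥ D *ᵥ g := psd_nonneg hD g
      have hequiv := (hS₁equiv g).1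
      have h1 : lam * (g ⬝ᵥ S₁til *ᵥ g) ≤ (lam / α₁) * (g ⬝ᵥ S₁ *ᵥ g) := by
        rw [div_mul_eq_mul_div, le_div_iff₀ hα₁]
        nlinarith only [mul_le_mul_of_nonneg_left hequiv hlam.le]
      have hqg : g ⬝ᵥ (B * A⁻¹ * Bᵀ) *ᵥ g = (Bᵀ *ᵥ g) ⬝ᵥ A⁻¹ *ᵥ (Bᵀ *ᵥ g) := by
        rw [show (B * A⁻¹ * Bᵀ) *ᵥ g = B *ᵥ (A⁻¹ *ᵥ (Bᵀ *ᵥ g)) by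
          rw [mulVec_mulVec, mulVec_mulVec], shift_transpose]
      have hs1g : g ⬝ᵥ S₁ *ᵥ g = g ⬝ᵥ D *ᵥ g + (Bᵀ *ᵥ g) ⬝ᵥ A⁻¹ *ᵥ (Bᵀ *ᵥ g) := by
        rw [hS₁, add_mulVec, dotProduct_add, hqg]
      have h2 : g ⬝ᵥ D *ᵥ g + (Bᵀ *ᵥ g) ⬝ᵥ N⁻¹ *ᵥ (Bᵀ *ᵥ g) ≤ κ * (g ⬝ᵥ S₁ *ᵥ g) := by
        rw [hs1g]
        have hAinvg : 0 ≤ (Bᵀ *ᵥ g) ⬝ᵥ A⁻¹ *ᵥ (Bᵀ *ᵥ g) := psd_nonneg hA.inv.posSemidef _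
        nlinarith only [hNinvA, hκ1, hgd, hAinvg]
      rw [← hgS1g]
      linarith only [h1, h2]
    have hwpos : 0 < w := by
      nlinarith only [hs2_lo, hs2ew, he_w, mul_pos hα₂ ht2pos, hηE0]
    have hcs2 : w ^ 2 ≤ (g ⬝ᵥ M *ᵥ g) * c := by
      have h1 := cs_gen M hMsymT hMnn g y
      rw [hgMy, ← hcMy] at h1
      exact h1
    have hwc : w ≤ (lam / α₁ + κ) * c := by
      nlinarith only [hcs2, mul_le_mul_of_nonneg_right hgMg hcpos.le, hwpos]
    have hc_le : c ≤ lam * t2 := by linarith only [se3, hee0]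
    have hα₂le : α₂ ≤ (1 + ηE) * (lam / α₁ + κ) * lam := by
      have h1 : α₂ * t2 ≤ (1 + ηE) * w := by linarith only [hs2_lo, hs2ew, he_w]
      have h2 : (1 + ηE) * w ≤ (1 + ηE) * ((lam / α₁ + κ) * c) :=
        mul_le_mul_of_nonneg_left hwc hηE1.le
      have hτpos : 0 < lam / α₁ + κ := by positivity
      have h3 : (lam / α₁ + κ) * c ≤ (lam / α₁ + κ) * (lam * t2) :=
        mul_le_mul_of_nonneg_left hc_le hτpos.le
      nlinarith only [h1, h2, h3, ht2pos, mul_le_mul_of_nonneg_left h3 hηE1.le]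
    -- final arithmetic
    apply uroot_le lam hlam
    have hne : (1 + ηE) ≠ 0 := ne_of_gt hηE1
    set γ := α₁ * α₂ / (1 + ηE) with hγdef
    have hγ : γ * (1 + ηE) = α₁ * α₂ := div_mul_cancel₀ _ hne
    have hγpos : 0 < γ := by rw [hγdef]; positivity
    have hα₁ne : α₁ ≠ 0 := ne_of_gt hα₁
    have hα₀lamne : α₀ - lam ≠ 0 := ne_of_gt hα₀lam
    have hkey : α₂ * (α₁ * (α₀ - lam)) ≤ (1 + ηE) * lam * (lam * (α₀ - lam) + α₁ * α₀) := by
      have h5 : (lam / α₁ + κ) * (α₁ * (α₀ - lam)) = lam * (α₀ - lam) + α₁ * α₀ := by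
        rw [hκdef]; field_simp
      have h6 : α₂ * (α₁ * (α₀ - lam))
          ≤ ((1 + ηE) * (lam / α₁ + κ) * lam) * (α₁ * (α₀ - lam)) := by
        apply mul_le_mul_of_nonneg_right hα₂le
        have := mul_pos hα₁ hα₀lam
        positivity
      calc α₂ * (α₁ * (α₀ - lam)) ≤ ((1 + ηE) * (lam / α₁ + κ) * lam) * (α₁ * (α₀ - lam)) := h6
      _ = (1 + ηE) * lam * ((lam / α₁ + κ) * (α₁ * (α₀ - lam))) := by ring
      _ = (1 + ηE) * lam * (lam * (α₀ - lam) + α₁ * α₀) := by rw [h5]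
    have hkey2 : γ * (α₀ - lam) ≤ lam * (lam * (α₀ - lam) + α₁ * α₀) := by
      have h7 : (1 + ηE) * (γ * (α₀ - lam)) = α₂ * (α₁ * (α₀ - lam)) := by
        linear_combination (α₀ - lam) * hγ
      have h8 : (1 + ηE) * (γ * (α₀ - lam))
          ≤ (1 + ηE) * (lam * (lam * (α₀ - lam) + α₁ * α₀)) := by
        rw [h7]
        calc α₂ * (α₁ * (α₀ - lam)) ≤ (1 + ηE) * lam * (lam * (α₀ - lam) + α₁ * α₀) := hkey
        _ = (1 + ηE) * (lam * (lam * (α₀ - lam) + α₁ * α₀)) := by ring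
      exact le_of_mul_le_mul_left h8 hηE1
    have hrw1 : α₀ * α₁ * α₂ / (1 + ηE) = α₀ * γ := by rw [hγdef]; ring
    rw [hrw1]
    have h1 : 0 ≤ (α₀ - lam) * (β₁ * lam) := by
      apply mul_nonneg hα₀lam.le
      have : (0:ℝ) < β₁ := by linarith only [hβ₁]
      positivity
    have h2 : α₀ * α₁ * lam ≤ β₀ * β₁ * lam := by
      have h3 : α₀ * α₁ ≤ β₀ * β₁ := by nlinarith only [hα₀, hα₀1, hα₁, hα₁1, hβ₀, hβ₁]
      exact mul_le_mul_of_nonneg_right h3 hlam.le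
    linarith only [hkey2, h1, h2]
  · -- upper bound : lam ≤ ρv
    have vle : ∀ t : ℝ, t ^ 3 - (β₀ + β₂) * t ^ 2 + (β₀ * β₂ - β₀ * β₁ - β₁ * β₂) * t
        + 2 * β₀ * β₁ * β₂ ≤ 0 → t ≤ ρv := by
      intro t ht
      obtain ⟨r, hr1, hr2⟩ := cubic_root_ge (-(β₀ + β₂)) (β₀ * β₂ - β₀ * β₁ - β₁ * β₂)
        (2 * β₀ * β₁ * β₂) t (by linarith only [ht])
      have h1 := hρvmax r (by linear_combination hr2)
      linarith only [hr1, h1]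
    rcases le_or_gt lam (max β₀ β₂) with hcase | hcase
    · have hmaxle : max β₀ β₂ ≤ ρv := by
        rcases le_total β₀ β₂ with h | h
        · rw [max_eq_right h]
          apply vle
          have hval : β₂ ^ 3 - (β₀ + β₂) * β₂ ^ 2 + (β₀ * β₂ - β₀ * β₁ - β₁ * β₂) * β₂
              + 2 * β₀ * β₁ * β₂ = β₁ * β₂ * (β₀ - β₂) := by ring
          rw [hval]
          have hp : 0 ≤ β₁ * β₂ * (β₂ - β₀) :=
            mul_nonneg (mul_nonneg (by linarith only [hβ₁]) (by linarith only [hβ₂]))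
              (sub_nonneg.mpr h)
          linarith only [hp]
        · rw [max_eq_left h]
          apply vle
          have hval : β₀ ^ 3 - (β₀ + β₂) * β₀ ^ 2 + (β₀ * β₂ - β₀ * β₁ - β₁ * β₂) * β₀
              + 2 * β₀ * β₁ * β₂ = β₀ * β₁ * (β₂ - β₀) := by ring
          rw [hval]
          have hp : 0 ≤ β₀ * β₁ * (β₀ - β₂) :=
            mul_nonneg (mul_nonneg (by linarith only [hβ₀]) (by linarith only [hβ₁]))
              (sub_nonneg.mpr h)
          linarith only [hp]
      linarith only [hcase, hmaxle]
    · have hβ₀lam : β₀ < lam := lt_of_le_of_lt (le_max_left _ _) hcase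
      have hβ₂lam : β₂ < lam := lt_of_le_of_lt (le_max_right _ _) hcase
      have hyne : y ≠ 0 := by
        intro hy0
        have hb0 : b = 0 := by rw [hb, hy0]; simp
        have hc0 : c = 0 := by rw [hc, hy0, mulVec_zero, dotProduct_zero]
        by_cases hx0 : x = 0
        · by_cases hz0 : z = 0
          · apply hv0
            rw [hvelim, hx0, hy0, hz0]
            funext i; rcases i with (i | i) | i <;> rfl
          · have ht2pos : 0 < t2 := by rw [ht2]; exact pd_pos hS₂til hz0
            have h1 : ee = lam * t2 := by linarith only [se3, hc0]
            have h2 : ee ≤ s2 := by linarith only [hs2ew, hw0]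
            linarith only [hs2_hi, h1, h2, mul_pos (sub_pos.mpr hβ₂lam) ht2pos]
        · have htapos : 0 < ta := by rw [hta]; exact pd_pos hAtil hx0
          have h1 : a = lam * ta := by linarith only [se1, hb0]
          linarith only [ha_hi, h1, mul_pos (sub_pos.mpr hβ₀lam) htapos]
      have ht1pos : 0 < t1 := by rw [ht1]; exact pd_pos hS₁til hyne
      -- b facts
      have hblo : (lam - β₀) * ta ≤ b := by nlinarith only [se1, ha_hi]
      have hbnn : 0 ≤ b :=
        le_trans (mul_nonneg (by linarith only [hβ₀lam]) hta0) hblo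
      have hq_le : q ≤ β₁ * t1 := by linarith only [hs1dq, hs1_hi, hd0]
      have ha0 : 0 ≤ a := le_trans (mul_nonneg hα₀.le hta0) ha_lo
      have hbb : b ^ 2 ≤ β₀ * β₁ * (ta * t1) := by
        have p1 : 0 ≤ (β₀ * ta - a) * q := mul_nonneg (by linarith only [ha_hi]) hq0
        have p2 : 0 ≤ (β₁ * t1 - q) * (β₀ * ta) :=
          mul_nonneg (by linarith only [hq_le]) (mul_nonneg (by linarith only [hβ₀]) hta0)
        nlinarith only [hb2, p1, p2]
      have hbbt : 0 ≤ β₀ * β₁ * t1 :=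
        mul_nonneg (mul_nonneg (by linarith only [hβ₀]) (by linarith only [hβ₁])) ht10
      have key1 : (lam - β₀) * b ≤ β₀ * β₁ * t1 := by
        rcases eq_or_lt_of_le hbnn with hb00 | hbpos
        · rw [← hb00]
          simpa using hbbt
        · have e1 : (lam - β₀) * (b * b) ≤ (lam - β₀) * (β₀ * β₁ * (ta * t1)) :=
            mul_le_mul_of_nonneg_left (by nlinarith only [hbb]) (by linarith only [hβ₀lam])
          have e2 : β₀ * β₁ * t1 * ((lam - β₀) * ta) ≤ β₀ * β₁ * t1 * b :=
            mul_le_mul_of_nonneg_left hblo hbbt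
          nlinarith only [e1, e2, hbpos]
      -- c facts
      have hclo : (lam - β₂) * t2 ≤ c := by
        nlinarith only [se3, hs2_hi, hs2ew, hw0]
      have hcnn : 0 ≤ c :=
        le_trans (mul_nonneg (by linarith only [hβ₂lam]) ht20) hclo
      have hw_le : w ≤ β₂ * t2 := by linarith only [hs2ew, hs2_hi, hee0]
      have hs10 : 0 ≤ s1 := le_trans (mul_nonneg hα₁.le ht10) hs1_lo
      have hcc : c ^ 2 ≤ β₁ * β₂ * (t1 * t2) := by
        have p1 : 0 ≤ (β₁ * t1 - s1) * w := mul_nonneg (by linarith only [hs1_hi]) hw0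
        have p2 : 0 ≤ (β₂ * t2 - w) * (β₁ * t1) :=
          mul_nonneg (by linarith only [hw_le]) (mul_nonneg (by linarith only [hβ₁]) ht10)
        nlinarith only [hc2, p1, p2]
      have hcct : 0 ≤ β₁ * β₂ * t1 :=
        mul_nonneg (mul_nonneg (by linarith only [hβ₁]) (by linarith only [hβ₂])) ht10
      have key2 : (lam - β₂) * c ≤ β₁ * β₂ * t1 := by
        rcases eq_or_lt_of_le hcnn with hc00 | hcpos
        · rw [← hc00]
          simpa using hcct
        · have e1 : (lam - β₂) * (c * c) ≤ (lam - β₂) * (β₁ * β₂ * (t1 * t2)) :=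
            mul_le_mul_of_nonneg_left (by nlinarith only [hcc]) (by linarith only [hβ₂lam])
          have e2 : β₁ * β₂ * t1 * ((lam - β₂) * t2) ≤ β₁ * β₂ * t1 * c :=
            mul_le_mul_of_nonneg_left hclo hcct
          nlinarith only [e1, e2, hcpos]
      have hse2' : lam * t1 ≤ b + c := by linarith only [se2, hd0]
      have hfin : lam * t1 * ((lam - β₀) * (lam - β₂))
          ≤ β₀ * β₁ * t1 * (lam - β₂) + β₁ * β₂ * t1 * (lam - β₀) := by
        have e4 : ((lam - β₀) * b) * (lam - β₂) ≤ (β₀ * β₁ * t1) * (lam - β₂) :=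
          mul_le_mul_of_nonneg_right key1 (by linarith only [hβ₂lam])
        have e5 : ((lam - β₂) * c) * (lam - β₀) ≤ (β₁ * β₂ * t1) * (lam - β₀) :=
          mul_le_mul_of_nonneg_right key2 (by linarith only [hβ₀lam])
        have e6 : lam * t1 * ((lam - β₀) * (lam - β₂)) ≤ (b + c) * ((lam - β₀) * (lam - β₂)) :=
          mul_le_mul_of_nonneg_right hse2'
            (mul_nonneg (by linarith only [hβ₀lam]) (by linarith only [hβ₂lam]))
        nlinarith only [e4, e5, e6]
      apply vle
      by_contra hcon
      push_neg at hcon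
      linarith only [hfin, mul_pos ht1pos hcon]
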